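/- Let X_1, X_2 be independent standard Gaussian random variables on ℝ, let β ∈ ℝ, and define h : ℝ² → ℝ by h(w_1, w_2) := E[(X_1 − β·X_1·X_2² − w_1·X_1 − w_2·X_2)²]. Then h(w_1, w_2) = (1 − w_1 − β)² + 2β² + w_2², so h attains its unique minimum at (w_1, w_2) = (1 − β, 0) with minimum value 2β². -/

import Mathlib

set_option maxRecDepth 4000

open MeasureTheory ProbabilityTheory Real Filter Asymptotics
open scoped ENNReal NNReal

noncomputable def Jg (n : ℕ) : ℝ := ∫ x : ℝ, x ^ n * rexp (-(2⁻¹ : ℝ) * x ^ 2)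

lemma integrable_Jg (n : ℕ) :
    Integrable (fun x : ℝ => x ^ n * rexp (-(2⁻¹ : ℝ) * x ^ 2)) := by
  have h := integrable_rpow_mul_exp_neg_mul_sq (b := (2⁻¹ : ℝ)) (by norm_num)
    (s := (n : ℝ)) (lt_of_lt_of_le neg_one_lt_zero (Nat.cast_nonneg n))
  simpa [Real.rpow_natCast] using h

lemma tendsto_Jg_top (n : ℕ) :
    Tendsto (fun x : ℝ => x ^ n * rexp (-(2⁻¹ : ℝ) * x ^ 2)) atTop (nhds 0) := by
  have h := rpow_mul_exp_neg_mul_sq_isLittleO_exp_neg (b := (2⁻¹ : ℝ)) (by norm_num) (n : ℝ)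
  have h2 : Tendsto (fun x : ℝ => rexp (-(1 / 2 : ℝ) * x)) atTop (nhds 0) := by
    have : Tendsto (fun x : ℝ => (1 / 2 : ℝ) * x) atTop atTop :=
      Tendsto.const_mul_atTop (by norm_num) tendsto_id
    simpa [Function.comp_def] using Real.tendsto_exp_neg_atTop_nhds_zero.comp this
  have := h.isBigO.trans_tendsto h2
  simpa [Real.rpow_natCast] using this

lemma tendsto_Jg_bot (n : ℕ) :
    Tendsto (fun x : ℝ => x ^ n * rexp (-(2⁻¹ : ℝ) * x ^ 2)) atBot (nhds 0) := by
  have h : Tendsto (fun x : ℝ => (-x) ^ n * rexp (-(2⁻¹ : ℝ) * (-x) ^ 2)) atTop (nhds 0) := by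
    have := (tendsto_Jg_top n).const_mul ((-1 : ℝ) ^ n)
    simp only [mul_zero] at this
    refine this.congr fun x => ?_
    rw [neg_sq, neg_pow]
    ring
  have hneg : Tendsto (fun x : ℝ => -x) atBot atTop := tendsto_neg_atBot_atTop
  have := h.comp hneg
  simpa [Function.comp_def] using this

lemma Jg_rec (n : ℕ) : Jg (n + 2) = (n + 1 : ℝ) * Jg n := by
  have hderiv : ∀ x : ℝ, HasDerivAt (fun x : ℝ => x ^ (n + 1) * rexp (-(2⁻¹ : ℝ) * x ^ 2))
      ((n + 1 : ℝ) * (x ^ n * rexp (-(2⁻¹ : ℝ) * x ^ 2))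
        - x ^ (n + 2) * rexp (-(2⁻¹ : ℝ) * x ^ 2)) x := by
    intro x
    have h1 : HasDerivAt (fun x : ℝ => x ^ (n + 1)) ((n + 1 : ℝ) * x ^ n) x := by
      simpa using hasDerivAt_pow (n + 1) x
    have h2 : HasDerivAt (fun x : ℝ => rexp (-(2⁻¹ : ℝ) * x ^ 2))
        (rexp (-(2⁻¹ : ℝ) * x ^ 2) * (-(2⁻¹ : ℝ) * (2 * x))) x := by
      have hx : HasDerivAt (fun x : ℝ => -(2⁻¹ : ℝ) * x ^ 2) (-(2⁻¹ : ℝ) * (2 * x)) x := by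
        simpa using ((hasDerivAt_pow 2 x).const_mul (-(2⁻¹ : ℝ)))
      exact hx.exp
    have := h1.mul h2
    exact this.congr_deriv (by ring)
  have hint : Integrable (fun x : ℝ => (n + 1 : ℝ) * (x ^ n * rexp (-(2⁻¹ : ℝ) * x ^ 2))
      - x ^ (n + 2) * rexp (-(2⁻¹ : ℝ) * x ^ 2)) :=
    ((integrable_Jg n).const_mul _).sub (integrable_Jg (n + 2))
  have key := integral_of_hasDerivAt_of_tendsto hderiv hint (tendsto_Jg_bot (n + 1))
    (tendsto_Jg_top (n + 1))
  rw [sub_zero] at key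
  rw [integral_sub ((integrable_Jg n).const_mul _) (integrable_Jg (n + 2)),
    integral_const_mul] at key
  unfold Jg
  linarith

lemma Jg_zero : Jg 0 = √(2 * π) := by
  unfold Jg
  simp only [pow_zero, one_mul]
  rw [integral_gaussian]
  norm_num [mul_comm]

lemma Jg_one : Jg 1 = 0 := by
  have hderiv : ∀ x : ℝ, HasDerivAt (fun x : ℝ => -rexp (-(2⁻¹ : ℝ) * x ^ 2))
      (x ^ 1 * rexp (-(2⁻¹ : ℝ) * x ^ 2)) x := by
    intro x
    have hx : HasDerivAt (fun x : ℝ => -(2⁻¹ : ℝ) * x ^ 2) (-(2⁻¹ : ℝ) * (2 * x)) x := by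
      simpa using ((hasDerivAt_pow 2 x).const_mul (-(2⁻¹ : ℝ)))
    have := hx.exp.neg
    exact this.congr_deriv (by ring)
  have hbot : Tendsto (fun x : ℝ => -rexp (-(2⁻¹ : ℝ) * x ^ 2)) atBot (nhds 0) := by
    have := (tendsto_Jg_bot 0).neg
    simpa using this
  have htop : Tendsto (fun x : ℝ => -rexp (-(2⁻¹ : ℝ) * x ^ 2)) atTop (nhds 0) := by
    have := (tendsto_Jg_top 0).neg
    simpa using this
  have key := integral_of_hasDerivAt_of_tendsto hderiv (integrable_Jg 1) hbot htop
  simpa [Jg] using key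

lemma pdf01 (x : ℝ) : gaussianPDFReal 0 1 x = (√(2 * π))⁻¹ * rexp (-(2⁻¹ : ℝ) * x ^ 2) := by
  simp only [gaussianPDFReal, NNReal.coe_one, mul_one, sub_zero]
  congr 1
  ring

lemma gaussianReal01_eq :
    gaussianReal 0 1
      = MeasureTheory.volume.withDensity fun x => ((gaussianPDFReal 0 1 x).toNNReal : ℝ≥0∞) := by
  rw [gaussianReal_of_var_ne_zero 0 one_ne_zero]
  rfl

lemma integral_gaussianReal01 (g : ℝ → ℝ) :
    ∫ x, g x ∂(gaussianReal 0 1) = ∫ x, gaussianPDFReal 0 1 x * g x := by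
  rw [gaussianReal01_eq,
    integral_withDensity_eq_integral_smul ((measurable_gaussianPDFReal 0 1).real_toNNReal) g]
  congr 1
  funext x
  simp [NNReal.smul_def, Real.coe_toNNReal _ (gaussianPDFReal_nonneg 0 1 x)]

lemma integrable_pow_gaussianReal (n : ℕ) :
    Integrable (fun x : ℝ => x ^ n) (gaussianReal 0 1) := by
  rw [gaussianReal01_eq, integrable_withDensity_iff
    ((measurable_gaussianPDFReal 0 1).real_toNNReal.coe_nnreal_ennreal)
    (Filter.Eventually.of_forall fun x => ENNReal.coe_lt_top)]
  have h : (fun x : ℝ => x ^ n * (((gaussianPDFReal 0 1 x).toNNReal : ℝ≥0∞)).toReal)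
      = fun x => (√(2 * π))⁻¹ * (x ^ n * rexp (-(2⁻¹ : ℝ) * x ^ 2)) := by
    funext x
    rw [ENNReal.coe_toReal, Real.coe_toNNReal _ (gaussianPDFReal_nonneg 0 1 x), pdf01]
    ring
  rw [h]
  exact (integrable_Jg n).const_mul _

lemma integral_pow_gaussianReal (n : ℕ) :
    ∫ x, x ^ n ∂(gaussianReal 0 1) = (√(2 * π))⁻¹ * Jg n := by
  rw [integral_gaussianReal01]
  have h : (fun x : ℝ => gaussianPDFReal 0 1 x * x ^ n)
      = fun x => (√(2 * π))⁻¹ * (x ^ n * rexp (-(2⁻¹ : ℝ) * x ^ 2)) := by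
    funext x
    rw [pdf01]
    ring
  rw [h, integral_const_mul]
  rfl

lemma sqrt_two_pi_ne : (√(2 * π)) ≠ 0 := by
  positivity

lemma mom0 : ∫ x, x ^ (0 : ℕ) ∂(gaussianReal 0 1) = 1 := by
  rw [integral_pow_gaussianReal, Jg_zero, inv_mul_cancel₀ sqrt_two_pi_ne]

lemma mom1 : ∫ x, x ^ (1 : ℕ) ∂(gaussianReal 0 1) = 0 := by
  rw [integral_pow_gaussianReal, Jg_one, mul_zero]

lemma Jg_two : Jg 2 = √(2 * π) := by
  have := Jg_rec 0
  simpa [Jg_zero] using this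

lemma mom2 : ∫ x, x ^ (2 : ℕ) ∂(gaussianReal 0 1) = 1 := by
  rw [integral_pow_gaussianReal, Jg_two, inv_mul_cancel₀ sqrt_two_pi_ne]

lemma mom3 : ∫ x, x ^ (3 : ℕ) ∂(gaussianReal 0 1) = 0 := by
  have h := Jg_rec 1
  rw [integral_pow_gaussianReal]
  simp only [Jg_one, mul_zero] at h
  rw [show (3 : ℕ) = 1 + 2 from rfl, h, mul_zero]

lemma mom4 : ∫ x, x ^ (4 : ℕ) ∂(gaussianReal 0 1) = 3 := by
  have h := Jg_rec 2
  rw [integral_pow_gaussianReal, show (4 : ℕ) = 2 + 2 from rfl, h, Jg_two]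
  rw [show ((2 : ℕ) : ℝ) + 1 = 3 by norm_num]
  field_simp

lemma prod_int (i j : ℕ) :
    ∫ q : ℝ × ℝ, q.1 ^ i * q.2 ^ j ∂((gaussianReal 0 1).prod (gaussianReal 0 1))
      = (∫ x, x ^ i ∂(gaussianReal 0 1)) * ∫ x, x ^ j ∂(gaussianReal 0 1) :=
  integral_prod_mul _ _

lemma prod_integrable (i j : ℕ) :
    Integrable (fun q : ℝ × ℝ => q.1 ^ i * q.2 ^ j) ((gaussianReal 0 1).prod (gaussianReal 0 1)) :=
  (integrable_pow_gaussianReal i).mul_prod (integrable_pow_gaussianReal j)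

open MeasureTheory ProbabilityTheory

/-- The NF objective of the toy example: for independent standard Gaussians
`X₁, X₂` and a linear explanation `g(x) = w₁x₁ + w₂x₂` of the model
`f(x) = x₁ − β·x₁·x₂²`, `h(w₁,w₂) = E[(X₁ − β·X₁·X₂² − w₁·X₁ − w₂·X₂)²]`. -/
noncomputable def toyNF (β w₁ w₂ : ℝ) : ℝ :=
  ∫ q : ℝ × ℝ, (q.1 - β * q.1 * q.2 ^ 2 - w₁ * q.1 - w₂ * q.2) ^ 2
    ∂((gaussianReal 0 1).prod (gaussianReal 0 1))

lemma toyNF_key (β w₁ w₂ : ℝ) :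
    toyNF β w₁ w₂ = (1 - w₁ - β) ^ 2 + 2 * β ^ 2 + w₂ ^ 2 := by
  have expand : toyNF β w₁ w₂ =
      ∫ q : ℝ × ℝ,
        ((1 - w₁) ^ 2 * (q.1 ^ 2 * q.2 ^ 0) + β ^ 2 * (q.1 ^ 2 * q.2 ^ 4)
          + w₂ ^ 2 * (q.1 ^ 0 * q.2 ^ 2) + (-(2 * (1 - w₁) * β)) * (q.1 ^ 2 * q.2 ^ 2)
          + (-(2 * (1 - w₁) * w₂)) * (q.1 ^ 1 * q.2 ^ 1)
          + (2 * β * w₂) * (q.1 ^ 1 * q.2 ^ 3))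
        ∂((gaussianReal 0 1).prod (gaussianReal 0 1)) := by
    unfold toyNF
    congr 1
    funext q
    ring
  have i1 := (prod_integrable 2 0).const_mul ((1 - w₁) ^ 2)
  have i2 := (prod_integrable 2 4).const_mul (β ^ 2)
  have i3 := (prod_integrable 0 2).const_mul (w₂ ^ 2)
  have i4 := (prod_integrable 2 2).const_mul (-(2 * (1 - w₁) * β))
  have i5 := (prod_integrable 1 1).const_mul (-(2 * (1 - w₁) * w₂))
  have i6 := (prod_integrable 1 3).const_mul (2 * β * w₂)
  set P := (gaussianReal 0 1).prod (gaussianReal 0 1) with hP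
  have i12 : Integrable (fun q : ℝ × ℝ => (1 - w₁) ^ 2 * (q.1 ^ 2 * q.2 ^ 0)
      + β ^ 2 * (q.1 ^ 2 * q.2 ^ 4)) P := i1.add i2
  have i123 : Integrable (fun q : ℝ × ℝ => (1 - w₁) ^ 2 * (q.1 ^ 2 * q.2 ^ 0)
      + β ^ 2 * (q.1 ^ 2 * q.2 ^ 4) + w₂ ^ 2 * (q.1 ^ 0 * q.2 ^ 2)) P := i12.add i3
  have i1234 : Integrable (fun q : ℝ × ℝ => (1 - w₁) ^ 2 * (q.1 ^ 2 * q.2 ^ 0)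
      + β ^ 2 * (q.1 ^ 2 * q.2 ^ 4) + w₂ ^ 2 * (q.1 ^ 0 * q.2 ^ 2)
      + (-(2 * (1 - w₁) * β)) * (q.1 ^ 2 * q.2 ^ 2)) P := i123.add i4
  have i12345 : Integrable (fun q : ℝ × ℝ => (1 - w₁) ^ 2 * (q.1 ^ 2 * q.2 ^ 0)
      + β ^ 2 * (q.1 ^ 2 * q.2 ^ 4) + w₂ ^ 2 * (q.1 ^ 0 * q.2 ^ 2)
      + (-(2 * (1 - w₁) * β)) * (q.1 ^ 2 * q.2 ^ 2)
      + (-(2 * (1 - w₁) * w₂)) * (q.1 ^ 1 * q.2 ^ 1)) P := i1234.add i5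
  rw [expand, integral_add i12345 i6,
    integral_add i1234 i5,
    integral_add i123 i4,
    integral_add i12 i3, integral_add i1 i2,
    integral_const_mul, integral_const_mul, integral_const_mul, integral_const_mul,
    integral_const_mul, integral_const_mul,
    prod_int, prod_int, prod_int, prod_int, prod_int, prod_int,
    mom0, mom1, mom2, mom3, mom4]
  ring

/-- **Toy example: the NF-minimizing linear coefficient is `1 − β`.**
`h(w₁,w₂) = (1 − w₁ − β)² + 2β² + w₂²`, so `h` attains its unique minimum at
`(w₁,w₂) = (1 − β, 0)` with minimum value `2β²`. -/
theorem toy_example_nf_minimizer (β : ℝ) :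
    (∀ w₁ w₂ : ℝ, toyNF β w₁ w₂ = (1 - w₁ - β) ^ 2 + 2 * β ^ 2 + w₂ ^ 2) ∧
    (∀ w₁ w₂ : ℝ, toyNF β (1 - β) 0 ≤ toyNF β w₁ w₂ ∧
      (toyNF β w₁ w₂ = toyNF β (1 - β) 0 → w₁ = 1 - β ∧ w₂ = 0)) ∧
    toyNF β (1 - β) 0 = 2 * β ^ 2 := by
  refine ⟨fun w₁ w₂ => toyNF_key β w₁ w₂, fun w₁ w₂ => ?_, by rw [toyNF_key]; ring⟩
  constructor
  · rw [toyNF_key, toyNF_key]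
    nlinarith [sq_nonneg (1 - w₁ - β), sq_nonneg w₂]
  · intro h
    rw [toyNF_key, toyNF_key] at h
    have h1 : (1 - w₁ - β) ^ 2 = 0 := by nlinarith [sq_nonneg (1 - w₁ - β), sq_nonneg w₂]
    have h2 : w₂ ^ 2 = 0 := by nlinarith [sq_nonneg (1 - w₁ - β), sq_nonneg w₂]
    have e1 := pow_eq_zero_iff (two_ne_zero) |>.mp h1
    have e2 := pow_eq_zero_iff (two_ne_zero) |>.mp h2
    exact ⟨by linarith, e2⟩
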